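/- Let G = ⟨N_R, Σ, θ, P⟩ be a totally rigid tree grammar and β ∈ N_R with β ≠ θ such that P contains exactly one production with left-hand side β, say β → t. Let G' be the grammar obtained by removing β from the non-terminals, deleting the production β → t, and substituting t for β in the right-hand sides of all remaining productions. Then L(G) = L(G'). -/

import Mathlib

/-- Terms (trees) over a ranked alphabet `F` and non-terminals `N`. -/
inductive Tm (F N : Type) : Type
  | func : F → List (Tm F N) → Tm F N
  | nt : N → Tm F N

namespace Tm

variable {F N N' : Type}

/-- The subterm of a term at a position (a list of natural numbers), if it exists. -/
def at? : Tm F N → List Nat → Option (Tm F N)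
  | t, [] => some t
  | nt _, _ :: _ => none
  | func _ args, i :: p =>
      match args[i]? with
      | some a => a.at? p
      | none => none
  termination_by t p => p.length

/-- The non-terminal `β` occurs at position `p` in a term. -/
inductive OccursAt (β : N) : Tm F N → List Nat → Prop
  | here : OccursAt β (nt β) []
  | there {f : F} {args : List (Tm F N)} {i : Nat} {a : Tm F N} {p : List Nat} :
      args[i]? = some a → OccursAt β a p → OccursAt β (func f args) (i :: p)

/-- The non-terminal `β` occurs in the term `t`. -/
def Occurs (β : N) (t : Tm F N) : Prop := ∃ p, OccursAt β t p

/-- A term is ground if it contains no non-terminals. -/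
inductive IsGround : Tm F N → Prop
  | func {f : F} {args : List (Tm F N)} : (∀ a ∈ args, IsGround a) → IsGround (func f args)

/-- Substitution of the term `s` for the non-terminal `β`. -/
def subst [DecidableEq N] (β : N) (s : Tm F N) : Tm F N → Tm F N
  | nt γ => if γ = β then s else nt γ
  | func f args => func f (args.attach.map fun a => subst β s a.1)
  decreasing_by all_goals (simp only [Tm.func.sizeOf_spec]; have := List.sizeOf_lt_of_mem a.2; omega)

/-- Renaming of non-terminals. -/
def mapNT (σ : N → N') : Tm F N → Tm F N'
  | nt γ => nt (σ γ)
  | func f args => func f (args.attach.map fun a => mapNT σ a.1)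
  decreasing_by all_goals (simp only [Tm.func.sizeOf_spec]; have := List.sizeOf_lt_of_mem a.2; omega)

/-- The size (number of symbol occurrences) of a term. -/
def size : Tm F N → Nat
  | nt _ => 1
  | func _ args => 1 + (args.attach.map fun a => size a.1).sum
  decreasing_by all_goals (simp only [Tm.func.sizeOf_spec]; have := List.sizeOf_lt_of_mem a.2; omega)

end Tm

/-- One rewrite step using the single production `pr`: replace one occurrence of the
    left-hand side non-terminal by the right-hand side. -/
inductive ProdStep {F N : Type} : (N × Tm F N) → Tm F N → Tm F N → Prop
  | here {β : N} {t : Tm F N} : ProdStep (β, t) (Tm.nt β) t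
  | inArg {pr : N × Tm F N} {f : F} {args : List (Tm F N)} {i : Nat} {a b : Tm F N} :
      args[i]? = some a → ProdStep pr a b → ProdStep pr (Tm.func f args) (Tm.func f (args.set i b))

/-- A rigid tree grammar: a set of rigid non-terminals, a start symbol and a set of
    productions.  (Taking `rigid = ∅` gives a plain regular tree grammar;
    `rigid = Set.univ` a totally rigid one.) -/
structure RTG (F N : Type) where
  rigid : Set N
  start : N
  prods : Set (N × Tm F N)

/-- A derivation of the term `t` in the grammar `G`: a sequence of terms starting with the
    start symbol and ending with `t`, each step rewriting by a production of `G`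
    (the list `prs` records which production is used at each step). -/
structure Deriv {F N : Type} (G : RTG F N) (t : Tm F N) where
  prs : List (N × Tm F N)
  seq : List (Tm F N)
  len : seq.length = prs.length + 1
  head : seq.head? = some (Tm.nt G.start)
  last : seq.getLast? = some t
  mem : ∀ pr ∈ prs, pr ∈ G.prods
  steps : ∀ (i : Nat) (a b : Tm F N) (pr : N × Tm F N),
      seq[i]? = some a → seq[i + 1]? = some b → prs[i]? = some pr → ProdStep pr a b

namespace Deriv

variable {F N : Type} {G : RTG F N} {t : Tm F N}

/-- `p` is a `β`-position of the derivation `D`. -/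
def IsPos (D : Deriv G t) (β : N) (p : List Nat) : Prop :=
  ∃ s ∈ D.seq, Tm.OccursAt β s p

/-- The rigidity condition: all positions at which a rigid non-terminal occurs during the
    derivation carry equal subterms of the final term. -/
def Rigid (D : Deriv G t) : Prop :=
  ∀ β ∈ G.rigid, ∀ p q, D.IsPos β p → D.IsPos β q → t.at? p = t.at? q

end Deriv

/-- The language of a rigid tree grammar: ground terms derivable from the start symbol by a
    derivation satisfying the rigidity condition. -/
def RTG.Lang {F N : Type} (G : RTG F N) : Set (Tm F N) :=
  { t | t.IsGround ∧ ∃ D : Deriv G t, D.Rigid }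

/-- The language of the underlying regular tree grammar (no rigidity condition). -/
def RTG.RegLang {F N : Type} (G : RTG F N) : Set (Tm F N) :=
  { t | t.IsGround ∧ Nonempty (Deriv G t) }

/-- One-step reachability between non-terminals: `α →_P β` iff some production `α → t` in `P`
    has `β` occurring in `t`. -/
def Reach {F N : Type} (P : Set (N × Tm F N)) (α β : N) : Prop :=
  ∃ t, (α, t) ∈ P ∧ Tm.Occurs β t

/-- A set of productions is acyclic if the transitive closure of `→_P` is irreflexive. -/
def Acyclic {F N : Type} (P : Set (N × Tm F N)) : Prop :=
  ∀ α, ¬ Relation.TransGen (Reach P) α α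



section ElimAux

open Relation

variable {F N : Type} [DecidableEq N]

set_option linter.unusedSectionVars false
set_option linter.unusedVariables false

/-! ### Basic facts about `at?` and `subst` -/

theorem subst_nt (β : N) (t : Tm F N) (γ : N) :
    Tm.subst β t (Tm.nt γ) = if γ = β then t else Tm.nt γ := by rw [Tm.subst]

theorem subst_func (β : N) (t : Tm F N) (f : F) (args : List (Tm F N)) :
    Tm.subst β t (Tm.func f args) = Tm.func f (args.map (Tm.subst β t)) := by
  rw [Tm.subst, List.attach_map_val]

theorem at?_nil (s : Tm F N) : s.at? [] = some s := by rw [Tm.at?]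

theorem at?_nt_cons (γ : N) (i : Nat) (p : List Nat) :
    (Tm.nt γ : Tm F N).at? (i :: p) = none := by rw [Tm.at?]

theorem at?_func_cons (f : F) (l : List (Tm F N)) {i : Nat} (p : List Nat) {a : Tm F N}
    (h : l[i]? = some a) : (Tm.func f l).at? (i :: p) = a.at? p := by
  rw [Tm.at?, h]

theorem at?_func_cons_none (f : F) (l : List (Tm F N)) {i : Nat} (p : List Nat)
    (h : l[i]? = none) : (Tm.func f l).at? (i :: p) = none := by
  rw [Tm.at?, h]

theorem at?_append : ∀ (p q : List Nat) (s : Tm F N),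
    s.at? (p ++ q) = (s.at? p).bind (fun w => w.at? q)
  | [], q, s => by rw [at?_nil]; rfl
  | i :: p, q, Tm.nt γ => by rw [List.cons_append, at?_nt_cons, at?_nt_cons]; rfl
  | i :: p, q, Tm.func f args => by
      rw [List.cons_append]
      cases h : args[i]? with
      | none => rw [at?_func_cons_none _ _ _ h, at?_func_cons_none _ _ _ h]; rfl
      | some a => rw [at?_func_cons _ _ _ h, at?_func_cons _ _ _ h, at?_append p q a]

theorem list_set_getElem?_self {α : Type _} :
    ∀ (l : List α) (i : Nat) (x : α), l[i]? = some x → l.set i x = l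
  | [], i, x, h => by simp at h
  | a :: l, 0, x, h => by
      simp only [List.getElem?_cons_zero, Option.some.injEq] at h
      simp [h]
  | a :: l, i + 1, x, h => by
      simp only [List.getElem?_cons_succ] at h
      simp [list_set_getElem?_self l i x h]

theorem ground_not_occursAt {γ : N} {s : Tm F N} {p : List Nat}
    (h : Tm.OccursAt γ s p) : ¬ s.IsGround := by
  induction h with
  | here => intro hg; cases hg
  | there hi _ ih =>
      intro hg
      cases hg with
      | func hall => exact ih (hall _ (List.mem_of_getElem? hi))

theorem subst_eq_self {β : N} {t : Tm F N} :
    ∀ (s : Tm F N), (∀ p, ¬ Tm.OccursAt β s p) → Tm.subst β t s = s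
  | Tm.nt γ, h => by
      rw [subst_nt]
      rcases eq_or_ne γ β with rfl | hne
      · exact absurd Tm.OccursAt.here (h [])
      · simp [hne]
  | Tm.func f args, h => by
      rw [subst_func]
      congr 1
      conv_rhs => rw [← List.map_id args]
      refine List.map_congr_left ?_
      intro a ha
      obtain ⟨i, hi⟩ := List.getElem?_of_mem ha
      exact subst_eq_self a fun p hp => h (i :: p) (Tm.OccursAt.there hi hp)
  termination_by s => sizeOf s
  decreasing_by
    simp only [Tm.func.sizeOf_spec]
    have := List.sizeOf_lt_of_mem ha
    omega

/-! ### Occurrences and substitution -/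

theorem occ_subst {β : N} {t : Tm F N} {γ : N} :
    ∀ (s : Tm F N) (p : List Nat), Tm.OccursAt γ (Tm.subst β t s) p →
      (Tm.OccursAt γ s p ∧ γ ≠ β) ∨
      ∃ p₀ r, p = p₀ ++ r ∧ Tm.OccursAt β s p₀ ∧ Tm.OccursAt γ t r
  | Tm.nt δ, p, h => by
      rw [subst_nt] at h
      by_cases hδ : δ = β
      · subst hδ
        rw [if_pos rfl] at h
        exact Or.inr ⟨[], p, rfl, Tm.OccursAt.here, h⟩
      · rw [if_neg hδ] at h
        cases h
        exact Or.inl ⟨Tm.OccursAt.here, hδ⟩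
  | Tm.func f args, p, h => by
      rw [subst_func] at h
      cases h with
      | there hj hq =>
          rename_i i a' q
          rw [List.getElem?_map] at hj
          obtain ⟨a, ha, rfl⟩ : ∃ a, args[i]? = some a ∧ a' = Tm.subst β t a := by
            cases hh : args[i]? with
            | none => rw [hh] at hj; cases hj
            | some a => rw [hh] at hj; exact ⟨a, rfl, (Option.some.inj hj).symm⟩
          have ham := List.mem_of_getElem? ha
          rcases occ_subst a q hq with ⟨h1, h2⟩ | ⟨p₀, r, rfl, h1, h2⟩
          · exact Or.inl ⟨Tm.OccursAt.there ha h1, h2⟩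
          · exact Or.inr ⟨i :: p₀, r, rfl, Tm.OccursAt.there ha h1, h2⟩
  termination_by s => sizeOf s
  decreasing_by
    simp only [Tm.func.sizeOf_spec]
    have := List.sizeOf_lt_of_mem ham
    omega

theorem occ_subst_keep {β γ : N} {t : Tm F N} (hγ : γ ≠ β) :
    ∀ {s : Tm F N} {p : List Nat}, Tm.OccursAt γ s p →
      Tm.OccursAt γ (Tm.subst β t s) p := by
  intro s p h
  induction h with
  | here => rw [subst_nt, if_neg hγ]; exact Tm.OccursAt.here
  | there hi _ ih =>
      rw [subst_func]
      exact Tm.OccursAt.there (by rw [List.getElem?_map, hi]; rfl) ih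

theorem occ_subst_beta {β γ : N} {t : Tm F N} {r : List Nat} (ht : Tm.OccursAt γ t r) :
    ∀ {s : Tm F N} {p₀ : List Nat}, Tm.OccursAt β s p₀ →
      Tm.OccursAt γ (Tm.subst β t s) (p₀ ++ r) := by
  intro s p₀ h
  induction h with
  | here => rw [subst_nt, if_pos rfl]; exact ht
  | there hi _ ih =>
      rw [subst_func]
      exact Tm.OccursAt.there (by rw [List.getElem?_map, hi]; rfl) ih

theorem at?_subst_of_occ {β : N} {t : Tm F N} :
    ∀ {s : Tm F N} {p : List Nat}, Tm.OccursAt β s p →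
      (Tm.subst β t s).at? p = some t := by
  intro s p h
  induction h with
  | here => rw [subst_nt, if_pos rfl, at?_nil]
  | there hi _ ih =>
      rw [subst_func, at?_func_cons _ _ _ (by rw [List.getElem?_map, hi]; rfl)]
      exact ih

theorem not_occ_subst {β : N} {t : Tm F N} (ht : ∀ r, ¬ Tm.OccursAt β t r)
    (s : Tm F N) : ∀ p, ¬ Tm.OccursAt β (Tm.subst β t s) p := by
  intro p hp
  rcases occ_subst s p hp with ⟨_, hne⟩ | ⟨p₀, r, _, _, h2⟩
  · exact hne rfl
  · exact ht r h2

theorem occ_of_at? {γ : N} {r : List Nat} :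
    ∀ (p : List Nat) (s w : Tm F N), s.at? p = some w →
      Tm.OccursAt γ w r → Tm.OccursAt γ s (p ++ r)
  | [], s, w, h, hw => by
      rw [at?_nil] at h
      cases h
      exact hw
  | i :: p, Tm.nt δ, w, h, hw => by rw [at?_nt_cons] at h; cases h
  | i :: p, Tm.func f args, w, h, hw => by
      cases ha : args[i]? with
      | none => rw [at?_func_cons_none _ _ _ ha] at h; cases h
      | some a =>
          rw [at?_func_cons _ _ _ ha] at h
          exact Tm.OccursAt.there ha (occ_of_at? p a w h hw)

/-! ### Facts about single rewrite steps -/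

theorem step_occ_lhs {pr : N × Tm F N} {a b : Tm F N} (h : ProdStep pr a b) :
    Tm.Occurs pr.1 a := by
  induction h with
  | here => exact ⟨[], Tm.OccursAt.here⟩
  | inArg hi _ ih =>
      obtain ⟨p, hp⟩ := ih
      exact ⟨_ :: p, Tm.OccursAt.there hi hp⟩

theorem step_occ_rhs {pr : N × Tm F N} {a b : Tm F N} (h : ProdStep pr a b) {γ : N}
    (hocc : Tm.Occurs γ pr.2) : Tm.Occurs γ b := by
  induction h with
  | here => exact hocc
  | inArg hi _ ih =>
      obtain ⟨q, hq⟩ := ih hocc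
      have hlt := (List.getElem?_eq_some_iff.1 hi).1
      exact ⟨_ :: q, Tm.OccursAt.there (List.getElem?_set_self hlt) hq⟩

theorem step_occ_persist {pr : N × Tm F N} {a b : Tm F N} (h : ProdStep pr a b) :
    ∀ {γ : N} {p : List Nat}, Tm.OccursAt γ a p →
      Tm.OccursAt γ b p ∨ (γ = pr.1 ∧ b.at? p = some pr.2) := by
  induction h with
  | here =>
      intro γ p hp
      cases hp
      exact Or.inr ⟨rfl, at?_nil _⟩
  | @inArg pr f args i a₀ b₀ hi hst ih =>
      intro γ p hp
      cases hp with
      | there hj hq =>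
          rename_i j c q
          by_cases hji : j = i
          · subst hji
            rw [hi] at hj
            cases hj
            have hlt := (List.getElem?_eq_some_iff.1 hi).1
            rcases ih hq with h1 | ⟨h1, h2⟩
            · exact Or.inl (Tm.OccursAt.there (List.getElem?_set_self hlt) h1)
            · refine Or.inr ⟨h1, ?_⟩
              rw [at?_func_cons _ _ _ (List.getElem?_set_self hlt)]
              exact h2
          · exact Or.inl (Tm.OccursAt.there (by rw [List.getElem?_set_ne (fun h => hji h.symm)]; exact hj) hq)

theorem step_occ_rev {pr : N × Tm F N} {a b : Tm F N} (h : ProdStep pr a b) {γ : N} :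
    ∀ {q : List Nat}, Tm.OccursAt γ b q → Tm.Occurs γ a ∨ Tm.Occurs γ pr.2 := by
  induction h with
  | here => intro q hq; exact Or.inr ⟨q, hq⟩
  | @inArg pr f args i a₀ b₀ hi hst ih =>
      intro q hq
      cases hq with
      | there hj hq' =>
          rename_i j c q'
          by_cases hji : j = i
          · subst hji
            have hlt := (List.getElem?_eq_some_iff.1 hi).1
            rw [List.getElem?_set_self hlt] at hj
            cases hj
            rcases ih hq' with ⟨q'', h1⟩ | h1
            · exact Or.inl ⟨j :: q'', Tm.OccursAt.there hi h1⟩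
            · exact Or.inr h1
          · rw [List.getElem?_set_ne (fun h => hji h.symm)] at hj
            exact Or.inl ⟨j :: q', Tm.OccursAt.there hj hq'⟩

theorem step_subst {β : N} {t : Tm F N} {γ : N} {u : Tm F N} (hγ : γ ≠ β) :
    ∀ {x y : Tm F N}, ProdStep (γ, u) x y →
      ProdStep (γ, Tm.subst β t u) (Tm.subst β t x) (Tm.subst β t y) := by
  intro x y h
  generalize hpr : (γ, u) = pr at h
  induction h with
  | here =>
      cases hpr
      rw [subst_nt, if_neg hγ]
      exact ProdStep.here
  | inArg hi hst ih =>
      cases hpr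
      rw [subst_func, subst_func, List.map_set]
      exact ProdStep.inArg (by rw [List.getElem?_map, hi]; rfl) (ih rfl)

theorem step_beta_subst {β : N} {t : Tm F N} (ht : ∀ r, ¬ Tm.OccursAt β t r) :
    ∀ {x y : Tm F N}, ProdStep (β, t) x y → Tm.subst β t x = Tm.subst β t y := by
  intro x y h
  generalize hpr : (β, t) = pr at h
  induction h with
  | here =>
      cases hpr
      rw [subst_nt, if_pos rfl, subst_eq_self t ht]
  | @inArg pr f args i a₀ b₀ hi hst ih =>
      cases hpr
      rw [subst_func, subst_func, List.map_set]
      have heq : (args.map (Tm.subst β t)).set i (Tm.subst β t b₀) = args.map (Tm.subst β t) := by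
        rw [← ih rfl]
        exact list_set_getElem?_self _ _ _ (by rw [List.getElem?_map, hi]; rfl)
      rw [heq]



/-! ### Refinement of terms (replacing non-terminal leaves by arbitrary terms) -/

inductive Refines : Tm F N → Tm F N → Prop
  | nt (γ : N) (v : Tm F N) : Refines (Tm.nt γ) v
  | func {f : F} {l₁ l₂ : List (Tm F N)} :
      l₁.length = l₂.length →
      (∀ (i : Nat) (x y : Tm F N), l₁[i]? = some x → l₂[i]? = some y → Refines x y) →
      Refines (Tm.func f l₁) (Tm.func f l₂)

theorem refines_refl : ∀ (s : Tm F N), Refines s s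
  | Tm.nt γ => Refines.nt γ _
  | Tm.func f l => by
      refine Refines.func rfl (fun i x y hx hy => ?_)
      obtain rfl : x = y := by rw [hx] at hy; exact Option.some.inj hy
      have hm := List.mem_of_getElem? hx
      exact refines_refl x
  termination_by s => sizeOf s
  decreasing_by
    simp only [Tm.func.sizeOf_spec]
    have := List.sizeOf_lt_of_mem hm
    omega

theorem refines_trans : ∀ {a b c : Tm F N}, Refines a b → Refines b c → Refines a c := by
  intro a b c h1
  induction h1 generalizing c with
  | nt γ v => intro _; exact Refines.nt γ c
  | @func f l₁ l₂ hlen h ih =>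
      intro h2
      cases h2 with
      | func hlen2 h2 =>
          rename_i l₃
          refine Refines.func (hlen.trans hlen2) (fun i x z hx hz => ?_)
          have hi : i < l₂.length := by
            have := (List.getElem?_eq_some_iff.1 hx).1
            omega
          obtain ⟨y, hy⟩ : ∃ y, l₂[i]? = some y := ⟨_, List.getElem?_eq_getElem hi⟩
          exact ih i x y hx hy (h2 i y z hy hz)

theorem step_refines {pr : N × Tm F N} {x y : Tm F N} (h : ProdStep pr x y) :
    Refines x y := by
  induction h with
  | here => exact Refines.nt _ _
  | @inArg pr f args i a₀ b₀ hi hst ih =>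
      refine Refines.func (by rw [List.length_set]) (fun j x' y' hx hy => ?_)
      by_cases hji : j = i
      · subst hji
        have hlt := (List.getElem?_eq_some_iff.1 hi).1
        rw [List.getElem?_set_self hlt] at hy
        cases hy
        rw [hi] at hx
        cases hx
        exact ih
      · rw [List.getElem?_set_ne (fun h => hji h.symm)] at hy
        rw [hx] at hy
        cases hy
        exact refines_refl _

theorem step_at? {pr : N × Tm F N} {x y : Tm F N} (h : ProdStep pr x y) :
    ∀ (p : List Nat) (u : Tm F N), x.at? p = some u →
      ∃ v, y.at? p = some v ∧ Refines u v := by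
  induction h with
  | @here β t =>
      intro p u hu
      cases p with
      | nil =>
          rw [at?_nil] at hu
          cases hu
          exact ⟨t, at?_nil t, Refines.nt β t⟩
      | cons i q => rw [at?_nt_cons] at hu; cases hu
  | @inArg pr f args i a₀ b₀ hi hst ih =>
      intro p u hu
      cases p with
      | nil =>
          rw [at?_nil] at hu
          cases hu
          exact ⟨_, at?_nil _, step_refines (ProdStep.inArg hi hst)⟩
      | cons j q =>
          have hlt := (List.getElem?_eq_some_iff.1 hi).1
          by_cases hji : j = i
          · subst hji
            rw [at?_func_cons _ _ _ hi] at hu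
            obtain ⟨v, hv, hr⟩ := ih q u hu
            exact ⟨v, by rw [at?_func_cons _ _ _ (List.getElem?_set_self hlt)]; exact hv, hr⟩
          · cases hc : args[j]? with
            | none => rw [at?_func_cons_none _ _ _ hc] at hu; cases hu
            | some c =>
                rw [at?_func_cons _ _ _ hc] at hu
                refine ⟨u, ?_, refines_refl u⟩
                rw [at?_func_cons _ _ _ (by rw [List.getElem?_set_ne (fun h => hji h.symm)]; exact hc)]
                exact hu

theorem chain_refines {R : Tm F N → Tm F N → Prop}
    (hR : ∀ x y, R x y → ∃ pr, ProdStep pr x y) {w t₀ : Tm F N}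
    (h : Relation.ReflTransGen R w t₀) :
    ∀ (p : List Nat) (u : Tm F N), w.at? p = some u →
      ∃ v, t₀.at? p = some v ∧ Refines u v := by
  induction h using Relation.ReflTransGen.head_induction_on with
  | refl => exact fun p u hu => ⟨u, hu, refines_refl u⟩
  | head hab _ ih =>
      intro p u hu
      obtain ⟨pr, hstep⟩ := hR _ _ hab
      obtain ⟨v, hv, hr⟩ := step_at? hstep p u hu
      obtain ⟨v', hv', hr'⟩ := ih p v hv
      exact ⟨v', hv', refines_trans hr hr'⟩

theorem refines_det : ∀ (u v₁ v₂ : Tm F N), Refines u v₁ → Refines u v₂ →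
    (∀ r, (∃ γ, Tm.OccursAt γ u r) → v₁.at? r = v₂.at? r) → v₁ = v₂
  | Tm.nt γ, v₁, v₂, _, _, h => by
      have := h [] ⟨γ, Tm.OccursAt.here⟩
      rw [at?_nil, at?_nil] at this
      exact Option.some.inj this
  | Tm.func f l, v₁, v₂, h1, h2, h => by
      cases h1 with
      | func hlen1 hh1 =>
          rename_i m₁
          cases h2 with
          | func hlen2 hh2 =>
              rename_i m₂
              congr 1
              refine List.ext_getElem? (fun i => ?_)
              by_cases hi : i < l.length
              · obtain ⟨x, hx⟩ : ∃ x, l[i]? = some x := ⟨_, List.getElem?_eq_getElem hi⟩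
                obtain ⟨y₁, hy₁⟩ : ∃ y, m₁[i]? = some y :=
                  ⟨_, List.getElem?_eq_getElem (by omega)⟩
                obtain ⟨y₂, hy₂⟩ : ∃ y, m₂[i]? = some y :=
                  ⟨_, List.getElem?_eq_getElem (by omega)⟩
                have hxm := List.mem_of_getElem? hx
                have : y₁ = y₂ := by
                  refine refines_det x y₁ y₂ (hh1 i x y₁ hx hy₁) (hh2 i x y₂ hx hy₂)
                    (fun r hr => ?_)
                  obtain ⟨γ, hγ⟩ := hr
                  have := h (i :: r) ⟨γ, Tm.OccursAt.there hx hγ⟩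
                  rw [at?_func_cons _ _ _ hy₁, at?_func_cons _ _ _ hy₂] at this
                  exact this
                rw [hy₁, hy₂, this]
              · rw [List.getElem?_eq_none (by omega), List.getElem?_eq_none (by omega)]
  termination_by u => sizeOf u
  decreasing_by
    simp only [Tm.func.sizeOf_spec]
    have := List.sizeOf_lt_of_mem hxm
    omega

/-! ### Chains of rewrite steps -/

def StepR (P : Set (N × Tm F N)) (a b : Tm F N) : Prop := ∃ pr ∈ P, ProdStep pr a b

theorem chain_cond {α β' : Type _} {R : α → α → Prop} {f : α → β'}
    (hpres : ∀ x y, R x y → f x = f y) {a b : α} (h : Relation.ReflTransGen R a b) :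
    Relation.ReflTransGen (fun x y => R x y ∧ f y = f b) a b := by
  induction h with
  | refl => exact Relation.ReflTransGen.refl
  | tail hac hcb ih =>
      refine Relation.ReflTransGen.tail (Relation.ReflTransGen.mono ?_ _ _ ih) ⟨hcb, rfl⟩
      rintro x y ⟨h1, h2⟩
      exact ⟨h1, h2.trans (hpres _ _ hcb)⟩

theorem getElem?_append_middle {α : Type _} (pre : List α) (x : α) (post : List α) :
    (pre ++ x :: post)[pre.length]? = some x := by
  rw [List.getElem?_append_right le_rfl]
  simp

theorem set_append_middle {α : Type _} :
    ∀ (pre : List α) (x y : α) (post : List α),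
      (pre ++ x :: post).set pre.length y = pre ++ y :: post
  | [], x, y, post => rfl
  | a :: pre, x, y, post => by
      simp only [List.cons_append, List.length_cons, List.set_cons_succ]
      rw [set_append_middle pre x y post]

theorem chain_args {R : Tm F N → Tm F N → Prop} (f : F)
    (hR : ∀ (pre post : List (Tm F N)) (x y : Tm F N), R x y →
        R (Tm.func f (pre ++ x :: post)) (Tm.func f (pre ++ y :: post)))
    (σ : Tm F N → Tm F N) :
    ∀ (post pre : List (Tm F N)),
      (∀ a ∈ post, Relation.ReflTransGen R a (σ a)) →
      Relation.ReflTransGen R (Tm.func f (pre ++ post)) (Tm.func f (pre ++ post.map σ)) := by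
  intro post
  induction post with
  | nil => intro pre _; exact Relation.ReflTransGen.refl
  | cons a as ih =>
      intro pre hall
      have h2 : Relation.ReflTransGen R (Tm.func f (pre ++ a :: as))
          (Tm.func f (pre ++ σ a :: as)) := by
        refine Relation.ReflTransGen.lift (fun z => Tm.func f (pre ++ z :: as)) ?_ _ _
          (hall a (List.mem_cons_self (a := a) (l := as)))
        intro x y hxy
        exact hR pre as x y hxy
      have h3 := ih (pre ++ [σ a]) (fun b hb => hall b (List.mem_cons_of_mem _ hb))
      simp only [List.map_cons, List.append_assoc, List.singleton_append] at h3 ⊢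
      exact h2.trans h3

theorem expand {β : N} {t : Tm F N} :
    ∀ (u : Tm F N), Relation.ReflTransGen (ProdStep (β, t)) u (Tm.subst β t u)
  | Tm.nt γ => by
      rw [subst_nt]
      by_cases hγ : γ = β
      · subst hγ
        rw [if_pos rfl]
        exact Relation.ReflTransGen.single ProdStep.here
      · rw [if_neg hγ]
  | Tm.func f args => by
      rw [subst_func]
      have hR : ∀ (pre post : List (Tm F N)) (x y : Tm F N), ProdStep (β, t) x y →
          ProdStep (β, t) (Tm.func f (pre ++ x :: post)) (Tm.func f (pre ++ y :: post)) := by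
        intro pre post x y hxy
        have := ProdStep.inArg (f := f) (getElem?_append_middle pre x post) hxy
        rwa [set_append_middle] at this
      have := chain_args f hR (Tm.subst β t) args [] (fun a ha => expand a)
      simpa using this
  termination_by u => sizeOf u
  decreasing_by
    simp only [Tm.func.sizeOf_spec]
    have := List.sizeOf_lt_of_mem ha
    omega

/-! ### Derivations and chains -/

theorem mkDeriv {G : RTG F N} {t₀ : Tm F N} (Q : Tm F N → Prop)
    (h : Relation.ReflTransGen (fun a b => StepR G.prods a b ∧ Q b) (Tm.nt G.start) t₀)
    (hQ : Q (Tm.nt G.start)) :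
    ∃ D : Deriv G t₀, ∀ s ∈ D.seq, Q s := by
  suffices h' : ∀ s : Tm F N, Relation.ReflTransGen (fun a b => StepR G.prods a b ∧ Q b) s t₀ →
      ∃ (prs : List (N × Tm F N)) (seq : List (Tm F N)),
        seq.length = prs.length + 1 ∧ seq.head? = some s ∧ seq.getLast? = some t₀ ∧
        (∀ pr ∈ prs, pr ∈ G.prods) ∧
        (∀ (i : Nat) (a b : Tm F N) (pr : N × Tm F N),
          seq[i]? = some a → seq[i+1]? = some b → prs[i]? = some pr → ProdStep pr a b) ∧
        (∀ x ∈ seq, x = s ∨ Q x) by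
    obtain ⟨prs, seq, h1, h2, h3, h4, h5, h6⟩ := h' _ h
    exact ⟨⟨prs, seq, h1, h2, h3, h4, h5⟩, fun x hx =>
      (h6 x hx).elim (fun e => e ▸ hQ) id⟩
  intro s hs
  induction hs using Relation.ReflTransGen.head_induction_on with
  | refl =>
      refine ⟨[], [t₀], rfl, rfl, rfl, by simp, ?_, by simp⟩
      intro i a b pr _ hb _
      simp at hb
  | @head s c hab _ ih =>
      obtain ⟨⟨pr, hprP, hstep⟩, hQc⟩ := hab
      obtain ⟨prs, seq, h1, h2, h3, h4, h5, h6⟩ := ih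
      obtain ⟨seq', rfl⟩ : ∃ seq', seq = c :: seq' := by
        rw [List.head?_eq_some_iff] at h2
        exact h2
      refine ⟨pr :: prs, s :: c :: seq', by simpa using h1, rfl,
        by rw [List.getLast?_cons_cons]; exact h3, ?_, ?_, ?_⟩
      · intro x hx
        rcases List.mem_cons.1 hx with rfl | hx
        · exact hprP
        · exact h4 x hx
      · intro i a b pr' ha hb hpr'
        cases i with
        | zero =>
            simp only [List.getElem?_cons_zero, Option.some.injEq] at ha hpr'
            have hb' : b = c := by
              have := hb; simp only [List.getElem?_cons_succ, List.getElem?_cons_zero,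
                Option.some.injEq] at this
              exact this.symm
            subst ha; subst hpr'; subst hb'
            exact hstep
        | succ i =>
            exact h5 i a b pr' (by simpa using ha) (by simpa using hb) (by simpa using hpr')
      · intro x hx
        rcases List.mem_cons.1 hx with rfl | hx
        · exact Or.inl rfl
        · rcases h6 x hx with rfl | hxQ
          · exact Or.inr hQc
          · exact Or.inr hxQ

theorem derivChainFrom {G : RTG F N} {t₀ : Tm F N} (D : Deriv G t₀) :
    ∀ (k : Nat) (a : Tm F N), D.seq[k]? = some a →
      Relation.ReflTransGen (fun x y => StepR G.prods x y ∧ x ∈ D.seq ∧ y ∈ D.seq) a t₀ := by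
  have key : ∀ (n k : Nat) (a : Tm F N), D.seq.length - k ≤ n → D.seq[k]? = some a →
      Relation.ReflTransGen (fun x y => StepR G.prods x y ∧ x ∈ D.seq ∧ y ∈ D.seq) a t₀ := by
    intro n
    induction n with
    | zero =>
        intro k a hle ha
        have := (List.getElem?_eq_some_iff.1 ha).1
        omega
    | succ n ih =>
        intro k a hle ha
        have hk := (List.getElem?_eq_some_iff.1 ha).1
        by_cases hlast : k + 1 = D.seq.length
        · have h1 : D.seq.getLast? = some a := by
            rw [List.getLast?_eq_getElem?, show D.seq.length - 1 = k by omega]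
            exact ha
          rw [D.last] at h1
          obtain rfl : t₀ = a := Option.some.inj h1
          exact Relation.ReflTransGen.refl
        · have hk1 : k + 1 < D.seq.length := by omega
          obtain ⟨b, hb⟩ : ∃ b, D.seq[k+1]? = some b := ⟨_, List.getElem?_eq_getElem hk1⟩
          have hkp : k < D.prs.length := by have := D.len; omega
          obtain ⟨pr, hpr⟩ : ∃ pr, D.prs[k]? = some pr := ⟨_, List.getElem?_eq_getElem hkp⟩
          have hstep := D.steps k a b pr ha hb hpr
          exact Relation.ReflTransGen.head
            ⟨⟨pr, D.mem pr (List.mem_of_getElem? hpr), hstep⟩,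
              List.mem_of_getElem? ha, List.mem_of_getElem? hb⟩
            (ih (k+1) b (by omega) hb)
  exact fun k a => key (D.seq.length - k) k a le_rfl

theorem derivChain {G : RTG F N} {t₀ : Tm F N} (D : Deriv G t₀) :
    Relation.ReflTransGen (fun x y => StepR G.prods x y ∧ x ∈ D.seq ∧ y ∈ D.seq)
      (Tm.nt G.start) t₀ := by
  refine derivChainFrom D 0 _ ?_
  rw [← List.head?_eq_getElem?]
  exact D.head

theorem start_mem_seq {G : RTG F N} {t₀ : Tm F N} (D : Deriv G t₀) :
    Tm.nt G.start ∈ D.seq :=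
  List.mem_of_mem_head? (by rw [D.head]; exact Option.mem_some_self _)

theorem seqInvariant {G : RTG F N} {t₀ : Tm F N} (D : Deriv G t₀) (Q : Tm F N → Prop)
    (h0 : Q (Tm.nt G.start))
    (hstep : ∀ (a b : Tm F N) (pr : N × Tm F N), pr ∈ G.prods → ProdStep pr a b → Q a → Q b) :
    ∀ s ∈ D.seq, Q s := by
  have key : ∀ (k : Nat) (a : Tm F N), D.seq[k]? = some a → Q a := by
    intro k
    induction k with
    | zero =>
        intro a ha
        have h := D.head
        rw [List.head?_eq_getElem?, ha] at h
        obtain rfl := Option.some.inj h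
        exact h0
    | succ k ih =>
        intro a ha
        have hk1 := (List.getElem?_eq_some_iff.1 ha).1
        have hk : k < D.seq.length := by omega
        obtain ⟨b, hb⟩ : ∃ b, D.seq[k]? = some b := ⟨_, List.getElem?_eq_getElem hk⟩
        have hkp : k < D.prs.length := by have := D.len; omega
        obtain ⟨pr, hpr⟩ : ∃ pr, D.prs[k]? = some pr := ⟨_, List.getElem?_eq_getElem hkp⟩
        exact hstep b a pr (D.mem pr (List.mem_of_getElem? hpr)) (D.steps k b a pr hb ha hpr)
          (ih b hb)
  intro s hs
  obtain ⟨k, hk⟩ := List.getElem?_of_mem hs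
  exact key k s hk

theorem prs_used {G : RTG F N} {t₀ : Tm F N} (D : Deriv G t₀) {pr : N × Tm F N}
    (hpr : pr ∈ D.prs) : ∃ a b, a ∈ D.seq ∧ b ∈ D.seq ∧ ProdStep pr a b := by
  obtain ⟨k, hk⟩ := List.getElem?_of_mem hpr
  have hkp := (List.getElem?_eq_some_iff.1 hk).1
  have h1 : k < D.seq.length := by have := D.len; omega
  have h2 : k + 1 < D.seq.length := by have := D.len; omega
  obtain ⟨a, ha⟩ : ∃ a, D.seq[k]? = some a := ⟨_, List.getElem?_eq_getElem h1⟩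
  obtain ⟨b, hb⟩ : ∃ b, D.seq[k+1]? = some b := ⟨_, List.getElem?_eq_getElem h2⟩
  exact ⟨a, b, List.mem_of_getElem? ha, List.mem_of_getElem? hb, D.steps k a b pr ha hb hk⟩

theorem beta_rewritten {G : RTG F N} {t₀ : Tm F N} (D : Deriv G t₀) (hg : t₀.IsGround)
    {β : N} {t : Tm F N} (huniq : ∀ s : Tm F N, (β, s) ∈ G.prods → s = t)
    {s : Tm F N} (hs : s ∈ D.seq) {p₀ : List Nat} (hocc : Tm.OccursAt β s p₀) :
    ∃ s₂ ∈ D.seq, s₂.at? p₀ = some t := by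
  obtain ⟨k, hk⟩ := List.getElem?_of_mem hs
  have hchain := derivChainFrom D k s hk
  clear hk hs
  induction hchain using Relation.ReflTransGen.head_induction_on with
  | refl => exact absurd hg (ground_not_occursAt hocc)
  | @head a c hab hrest ih =>
      obtain ⟨⟨pr, hprP, hstep⟩, hamem, hcmem⟩ := hab
      rcases step_occ_persist hstep hocc with h | ⟨h1, h2⟩
      · exact ih h
      · obtain ⟨pr1, pr2⟩ := pr
        obtain rfl : β = pr1 := h1
        have : pr2 = t := huniq pr2 hprP
        subst this
        exact ⟨c, hcmem, h2⟩

theorem occurs_final {G : RTG F N} {t₀ : Tm F N} (D : Deriv G t₀) {β : N}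
    (hyp : ∀ pr ∈ G.prods, pr.1 = β → Tm.Occurs β pr.2)
    {s : Tm F N} (hs : s ∈ D.seq) (h : Tm.Occurs β s) : Tm.Occurs β t₀ := by
  obtain ⟨k, hk⟩ := List.getElem?_of_mem hs
  have hchain := derivChainFrom D k s hk
  clear hk hs
  induction hchain using Relation.ReflTransGen.head_induction_on with
  | refl => exact h
  | @head a c hab hrest ih =>
      obtain ⟨⟨pr, hprP, hstep⟩, hamem, hcmem⟩ := hab
      obtain ⟨p, hp⟩ := h
      rcases step_occ_persist hstep hp with h1 | ⟨h1, h2⟩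
      · exact ih ⟨p, h1⟩
      · obtain ⟨r, hr⟩ := hyp pr hprP h1.symm
        exact ih ⟨p ++ r, occ_of_at? p c pr.2 h2 hr⟩

theorem branch {P : Set (N × Tm F N)} {β : N} {t : Tm F N}
    (hβt : (β, t) ∈ P) (ht : ∀ r, ¬ Tm.OccursAt β t r)
    {γ : N} {u : Tm F N} (hγu : (γ, u) ∈ P) :
    ∀ {a b : Tm F N}, ProdStep (γ, Tm.subst β t u) a b →
      Relation.ReflTransGen
        (fun x y => StepR P x y ∧ Tm.subst β t y = Tm.subst β t b) a b := by
  intro a b h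
  generalize hpr : (γ, Tm.subst β t u) = pr at h
  induction h with
  | @here β' t' =>
      obtain ⟨rfl, h2'⟩ := Prod.mk.injEq γ (Tm.subst β t u) β' t' ▸ hpr
      subst h2'
      have hfirst : Relation.ReflTransGen
          (fun x y => StepR P x y ∧ Tm.subst β t y = Tm.subst β t (Tm.subst β t u))
          u (Tm.subst β t u) := by
        have hch := chain_cond (f := Tm.subst β t)
          (fun x y hxy => step_beta_subst ht hxy) (expand u)
        refine Relation.ReflTransGen.mono ?_ _ _ hch
        rintro x y ⟨h1, h2⟩
        exact ⟨⟨(β, t), hβt, h1⟩, h2⟩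
      have hidem : Tm.subst β t (Tm.subst β t u) = Tm.subst β t u :=
        subst_eq_self _ (not_occ_subst ht u)
      exact Relation.ReflTransGen.head ⟨⟨(γ, u), hγu, ProdStep.here⟩, hidem.symm⟩ hfirst
  | @inArg pr' f args i a₀ b₀ hi hst ih =>
      have hch := ih hpr
      have hlt := (List.getElem?_eq_some_iff.1 hi).1
      have hmain : Relation.ReflTransGen
          (fun x y => StepR P x y ∧
            Tm.subst β t y = Tm.subst β t (Tm.func f (args.set i b₀)))
          (Tm.func f (args.set i a₀)) (Tm.func f (args.set i b₀)) := by
        refine Relation.ReflTransGen.lift (fun z => Tm.func f (args.set i z)) ?_ _ _ hch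
        rintro x y ⟨⟨pr'', hpr'', hstep''⟩, hcond⟩
        refine ⟨⟨pr'', hpr'', ?_⟩, ?_⟩
        · have := ProdStep.inArg (f := f) (List.getElem?_set_self (a := x) hlt) hstep''
          rwa [List.set_set] at this
        · rw [subst_func, subst_func, List.map_set, List.map_set, hcond]
      rwa [list_set_getElem?_self _ _ _ hi] at hmain

theorem occ_nt_inv {γ δ : N} {p : List Nat} (h : Tm.OccursAt γ (Tm.nt δ : Tm F N) p) :
    γ = δ ∧ p = [] := by
  cases h
  exact ⟨rfl, rfl⟩

end ElimAux

set_option maxHeartbeats 1000000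


/-- eliminating a non-start non-terminal `β` with a unique production `β → t`
    from a totally rigid tree grammar, substituting `t` for `β` in all remaining
    right-hand sides, preserves the language. -/
theorem elim_unique_rigid_nonterminal {F N : Type} [DecidableEq N] (G : RTG F N)
    (hrig : G.rigid = Set.univ) (β : N) (t : Tm F N) (hβ : β ≠ G.start)
    (hmem : (β, t) ∈ G.prods) (huniq : ∀ s : Tm F N, (β, s) ∈ G.prods → s = t) :
    G.Lang =
      RTG.Lang
        { rigid := Set.univ
          start := G.start
          prods := { p | ∃ γ u, (γ, u) ∈ G.prods ∧ (γ, u) ≠ (β, t) ∧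
            p = (γ, Tm.subst β t u) } } := by
  classical
  set P' : Set (N × Tm F N) :=
    { p | ∃ γ u, (γ, u) ∈ G.prods ∧ (γ, u) ≠ (β, t) ∧ p = (γ, Tm.subst β t u) } with hP'
  set G2 : RTG F N := { rigid := Set.univ, start := G.start, prods := P' } with hG2
  have hG2p : G2.prods = P' := rfl
  have hG2s : G2.start = G.start := rfl
  have hstart : Tm.subst β t (Tm.nt G.start) = Tm.nt G.start := by
    rw [subst_nt, if_neg (fun h => hβ h.symm)]
  by_cases hto : Tm.Occurs β t
  · -- degenerate case: `β` occurs in `t`, so `β` can never appear in any derivation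
    -- of a ground term, in either grammar.
    ext t₀
    simp only [RTG.Lang, Set.mem_setOf_eq]
    constructor
    · rintro ⟨hg, D, hD⟩
      refine ⟨hg, ?_⟩
      have hyp : ∀ pr ∈ G.prods, pr.1 = β → Tm.Occurs β pr.2 := by
        rintro ⟨γ, u⟩ hpr h1
        cases h1
        have := huniq u hpr
        subst this
        exact hto
      have hfree : ∀ s ∈ D.seq, ∀ p, ¬ Tm.OccursAt β s p := by
        intro s hs p hp
        obtain ⟨q, hq⟩ := occurs_final D hyp hs ⟨p, hp⟩
        exact ground_not_occursAt hq hg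
      refine ⟨⟨D.prs, D.seq, D.len, D.head, D.last, ?_, D.steps⟩,
        fun γ _ p q hp hq => hD γ (by rw [hrig]; trivial) p q hp hq⟩
      intro pr hpr
      obtain ⟨a, b, ha, hb, hstep⟩ := prs_used D hpr
      have h1 : pr.1 ≠ β := by
        intro h
        obtain ⟨q, hq⟩ := step_occ_lhs hstep
        exact hfree a ha q (h ▸ hq)
      have h2 : ∀ p, ¬ Tm.OccursAt β pr.2 p := by
        intro p hp
        obtain ⟨q, hq⟩ := step_occ_rhs hstep ⟨p, hp⟩
        exact hfree b hb q hq
      exact ⟨pr.1, pr.2, (by rw [Prod.mk.eta]; exact D.mem pr hpr),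
        fun he => h1 (congrArg Prod.fst he),
        by rw [subst_eq_self pr.2 h2, Prod.mk.eta]⟩
    · rintro ⟨hg, D', hD'⟩
      refine ⟨hg, ?_⟩
      have hyp' : ∀ pr ∈ G2.prods, pr.1 = β → Tm.Occurs β pr.2 := by
        rintro pr ⟨γ, u, hu, hne, rfl⟩ h1
        have hγβ : γ = β := h1
        subst hγβ
        exact absurd (huniq u hu) (fun he => hne (by rw [he]))
      have hfree' : ∀ s ∈ D'.seq, ∀ p, ¬ Tm.OccursAt β s p := by
        intro s hs p hp
        obtain ⟨q, hq⟩ := occurs_final D' hyp' hs ⟨p, hp⟩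
        exact ground_not_occursAt hq hg
      refine ⟨⟨D'.prs, D'.seq, D'.len, D'.head, D'.last, ?_, D'.steps⟩,
        fun γ _ p q hp hq => hD' γ (Set.mem_univ γ) p q hp hq⟩
      intro pr hpr
      obtain ⟨a, b, ha, hb, hstep⟩ := prs_used D' hpr
      obtain ⟨γ, u, hu, hne, rfl⟩ := D'.mem pr hpr
      have hu_free : ∀ p, ¬ Tm.OccursAt β u p := by
        intro p hp
        obtain ⟨r, hr⟩ := hto
        have h2 : Tm.OccursAt β (Tm.subst β t u) (p ++ r) := occ_subst_beta hr hp
        obtain ⟨q, hq⟩ := step_occ_rhs hstep ⟨p ++ r, h2⟩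
        exact hfree' b hb q hq
      rw [subst_eq_self u hu_free]
      exact hu
  · -- main case: `t` contains no `β`
    have ht : ∀ r, ¬ Tm.OccursAt β t r := fun r hr => hto ⟨r, hr⟩
    ext t₀
    simp only [RTG.Lang, Set.mem_setOf_eq]
    constructor
    · rintro ⟨hg, D, hD⟩
      refine ⟨hg, ?_⟩
      have hg' : ∀ p, ¬ Tm.OccursAt β t₀ p := fun p hp => ground_not_occursAt hp hg
      have hchain := derivChain D
      have hlift : Relation.ReflTransGen
          (fun a b => StepR G2.prods a b ∧ (∃ s ∈ D.seq, b = Tm.subst β t s))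
          (Tm.subst β t (Tm.nt G.start)) (Tm.subst β t t₀) := by
        refine Relation.ReflTransGen.lift' (Tm.subst β t) ?_ _ _ hchain
        rintro a b ⟨⟨⟨γ, u⟩, hpr, hstep⟩, hamem, hbmem⟩
        by_cases hγ : γ = β
        · subst hγ
          have := huniq u hpr
          subst this
          rw [Function.onFun, step_beta_subst ht hstep]
        · exact Relation.ReflTransGen.single
            ⟨⟨(γ, Tm.subst β t u), ⟨γ, u, hpr, fun he => hγ (congrArg Prod.fst he), rfl⟩,
              step_subst hγ hstep⟩, ⟨b, hbmem, rfl⟩⟩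
      rw [hstart, subst_eq_self t₀ hg'] at hlift
      obtain ⟨D', hseq'⟩ := mkDeriv (G := G2) (fun x => ∃ s ∈ D.seq, x = Tm.subst β t s)
        hlift ⟨Tm.nt G.start, start_mem_seq D, hstart.symm⟩
      have key : ∀ (p : List Nat) (γ : N), D'.IsPos γ p → D.IsPos γ p := by
        rintro p γ ⟨s', hs', hocc⟩
        obtain ⟨s, hs, rfl⟩ := hseq' s' hs'
        rcases occ_subst s p hocc with ⟨h1, _⟩ | ⟨p₀, r, rfl, h1, h2⟩
        · exact ⟨s, hs, h1⟩
        · obtain ⟨s₂, hs₂, hat⟩ := beta_rewritten D hg huniq hs h1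
          exact ⟨s₂, hs₂, occ_of_at? p₀ s₂ t hat h2⟩
      exact ⟨D', fun γ _ p q hp hq =>
        hD γ (by rw [hrig]; trivial) p q (key p γ hp) (key q γ hq)⟩
    · rintro ⟨hg, D', hD'⟩
      refine ⟨hg, ?_⟩
      have hfree' : ∀ s ∈ D'.seq, ∀ p, ¬ Tm.OccursAt β s p := by
        refine seqInvariant D' (fun x => ∀ p, ¬ Tm.OccursAt β x p) ?_ ?_
        · intro p hp
          exact hβ (occ_nt_inv hp).1
        · rintro a b pr hpr hstep hQ p hp
          rcases step_occ_rev hstep hp with ⟨q, hq⟩ | ⟨r, hr⟩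
          · exact hQ q hq
          · obtain ⟨γ, u, hu, hne, rfl⟩ := hpr
            exact not_occ_subst ht u r hr
      have hchain := derivChain D'
      have hlift : Relation.ReflTransGen
          (fun a b => StepR G.prods a b ∧ Tm.subst β t b ∈ D'.seq)
          (Tm.nt G.start) t₀ := by
        refine Relation.reflTransGen_closed ?_ _ _ hchain
        rintro a b ⟨⟨pr, hpr, hstep⟩, hamem, hbmem⟩
        obtain ⟨γ, u, hu, hne, rfl⟩ := hpr
        have hbr := branch hmem ht hu hstep
        refine Relation.ReflTransGen.mono ?_ _ _ hbr
        rintro x y ⟨h1, h2⟩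
        refine ⟨h1, ?_⟩
        rw [h2, subst_eq_self b (hfree' b hbmem)]
        exact hbmem
      obtain ⟨D, hseq⟩ := mkDeriv (G := G) (fun x => Tm.subst β t x ∈ D'.seq) hlift
        (by show Tm.subst β t (Tm.nt G.start) ∈ D'.seq
            rw [hstart]; exact start_mem_seq D')
      refine ⟨D, ?_⟩
      intro γ _ p q hp hq
      obtain ⟨s, hs, hocc⟩ := hp
      obtain ⟨s', hs', hocc'⟩ := hq
      by_cases hγβ : γ = β
      · rw [hγβ] at hocc hocc'
        have h1 : (Tm.subst β t s).at? p = some t := at?_subst_of_occ hocc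
        have h2 : (Tm.subst β t s').at? q = some t := at?_subst_of_occ hocc'
        have hm1 := hseq s hs
        have hm2 := hseq s' hs'
        obtain ⟨k1, hk1⟩ := List.getElem?_of_mem hm1
        obtain ⟨k2, hk2⟩ := List.getElem?_of_mem hm2
        have hc1 := derivChainFrom D' k1 _ hk1
        have hc2 := derivChainFrom D' k2 _ hk2
        have hR : ∀ (x y : Tm F N),
            (StepR G2.prods x y ∧ x ∈ D'.seq ∧ y ∈ D'.seq) → ∃ pr, ProdStep pr x y := by
          rintro x y ⟨⟨pr, _, hs⟩, _, _⟩
          exact ⟨pr, hs⟩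
        obtain ⟨v, hv, hrv⟩ := chain_refines hR hc1 p t h1
        obtain ⟨v', hv', hrv'⟩ := chain_refines hR hc2 q t h2
        have hval : ∀ r, (∃ δ, Tm.OccursAt δ t r) → v.at? r = v'.at? r := by
          rintro r ⟨δ, hδ⟩
          have o1 : Tm.OccursAt δ (Tm.subst β t s) (p ++ r) := occ_of_at? p _ t h1 hδ
          have o2 : Tm.OccursAt δ (Tm.subst β t s') (q ++ r) := occ_of_at? q _ t h2 hδ
          have hrr := hD' δ (Set.mem_univ δ) (p ++ r) (q ++ r) ⟨_, hm1, o1⟩ ⟨_, hm2, o2⟩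
          rw [at?_append, at?_append, hv, hv'] at hrr
          simpa using hrr
        have hvv := refines_det t v v' hrv hrv' hval
        rw [hv, hv', hvv]
      · have h1 : D'.IsPos γ p := ⟨_, hseq s hs, occ_subst_keep hγβ hocc⟩
        have h2 : D'.IsPos γ q := ⟨_, hseq s' hs', occ_subst_keep hγβ hocc'⟩
        exact hD' γ (Set.mem_univ γ) p q h1 h2
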